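/- Let T be the Tsirelson space (Figiel–Johnson), n ∈ ℕ, ε > 0, and x = Σ_{k∈F} c_k e_k a (n,ε)-basic special convex combination. Then for every G ⊆ F, ‖Σ_{k∈G} c_k e_k‖_T ≤ (1/2^n) Σ_{k∈G} c_k + ε. -/

import Mathlib

/-- The Schreier families. -/
def Schreier : ℕ → Set (Finset ℕ)
  | 0 => {F | F.card ≤ 1}
  | n + 1 => {F | ∃ (k : ℕ) (G : Fin k → Finset ℕ),
      (∀ i, G i ∈ Schreier n) ∧
      (∀ i, (G i).Nonempty) ∧
      (∀ i j : Fin k, i < j → ∀ a ∈ G i, ∀ b ∈ G j, a < b) ∧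
      F = Finset.univ.biUnion G ∧
      (∀ a ∈ F, k ≤ a)}

lemma schreier_empty (m : ℕ) : (∅ : Finset ℕ) ∈ Schreier m := by
  cases m with
  | zero => simp [Schreier]
  | succ m =>
    refine ⟨0, fun i => i.elim0, fun i => i.elim0, fun i => i.elim0,
      fun i => i.elim0, by simp, by simp⟩

lemma schreier_biUnion {m d : ℕ} (G : Fin d → Finset ℕ)
    (h1 : ∀ i, G i ∈ Schreier m)
    (h3 : ∀ i j : Fin d, i < j → ∀ a ∈ G i, ∀ b ∈ G j, a < b)
    (h4 : ∀ a ∈ Finset.univ.biUnion G, d ≤ a) :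
    Finset.univ.biUnion G ∈ Schreier (m + 1) := by
  classical
  set s : Finset (Fin d) := Finset.univ.filter (fun i => (G i).Nonempty) with hs
  set k := s.card with hk
  let e := s.orderIsoOfFin rfl
  refine ⟨k, fun j => G (e j), fun j => h1 _, fun j => ?_, ?_, ?_, ?_⟩
  · have := (e j).2
    exact (Finset.mem_filter.1 this).2
  · intro i j hij a ha b hb
    exact h3 (e i) (e j) (e.strictMono hij) a ha b hb
  · ext a
    simp only [Finset.mem_biUnion, Finset.mem_univ, true_and]
    constructor
    · rintro ⟨i, hi⟩
      have hmem : i ∈ s := by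
        rw [hs, Finset.mem_filter]; exact ⟨Finset.mem_univ _, ⟨a, hi⟩⟩
      exact ⟨e.symm ⟨i, hmem⟩, by simpa using hi⟩
    · rintro ⟨j, hj⟩
      exact ⟨e j, hj⟩
  · intro a ha
    refine le_trans ?_ (h4 a ha)
    calc k = s.card := rfl
      _ ≤ (Finset.univ : Finset (Fin d)).card := Finset.card_le_card (Finset.subset_univ s)
      _ = d := by simp

lemma schreier_hereditary : ∀ m : ℕ, ∀ F H : Finset ℕ, F ∈ Schreier m → H ⊆ F →
    H ∈ Schreier m := by
  intro m
  induction m with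
  | zero => intro F H hF hH; exact le_trans (Finset.card_le_card hH) hF
  | succ m ih =>
    rintro F H ⟨d, G, h1, h2, h3, rfl, h4⟩ hH
    classical
    have hrep : H = Finset.univ.biUnion (fun i => G i ∩ H) := by
      ext a
      simp only [Finset.mem_biUnion, Finset.mem_univ, true_and, Finset.mem_inter]
      constructor
      · intro ha
        have := hH ha
        simp only [Finset.mem_biUnion, Finset.mem_univ, true_and] at this
        obtain ⟨i, hi⟩ := this
        exact ⟨i, hi, ha⟩
      · rintro ⟨i, _, ha⟩; exact ha
    rw [hrep]
    refine schreier_biUnion _ (fun i => ih _ _ (h1 i) (Finset.inter_subset_left)) ?_ ?_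
    · intro i j hij a ha b hb
      exact h3 i j hij a (Finset.mem_inter.1 ha).1 b (Finset.mem_inter.1 hb).1
    · intro a ha
      rw [← hrep] at ha
      exact h4 a (hH ha)

lemma schreier_singleton (m : ℕ) {i : ℕ} (hi : 1 ≤ i) : ({i} : Finset ℕ) ∈ Schreier m := by
  induction m with
  | zero => simp [Schreier]
  | succ m ih =>
    refine ⟨1, fun _ => {i}, fun _ => ih, fun _ => ⟨i, by simp⟩, ?_, by simp, ?_⟩
    · intro a b hab
      exact absurd hab (by omega)
    · intro a ha
      have : a = i := by simpa using ha
      omega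

lemma schreier_succ_pos {m : ℕ} {F : Finset ℕ} (hF : F ∈ Schreier (m + 1)) :
    ∀ a ∈ F, 1 ≤ a := by
  obtain ⟨d, G, _, _, _, rfl, h4⟩ := hF
  intro a ha
  have hd := h4 a ha
  rcases Nat.eq_zero_or_pos d with rfl | hd'
  · simp at ha
  · omega

/-- `(n,ε)`-basic special convex combination. -/
def IsBasicSCC (n : ℕ) (ε : ℝ) (F : Finset ℕ) (c : ℕ → ℝ) : Prop :=
  F ∈ Schreier n ∧ (∀ k ∈ F, 0 ≤ c k) ∧ (∑ k ∈ F, c k = 1) ∧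
    ∀ G ⊆ F, G ∈ Schreier (n - 1) → ∑ k ∈ G, c k < ε

/-- The norming set of the Figiel–Johnson Tsirelson space `T`: the smallest
symmetric set of finitely supported functionals containing the biorthogonal
functionals `e_i^*` and closed under the operation
`(f_1, …, f_d) ↦ (1/2)(f_1 + ⋯ + f_d)` for `S_1`-admissible (successive,
`d ≤ min supp f_1`) families. -/
inductive TsirelsonNorming : (ℕ →₀ ℝ) → Prop
  | basis (i : ℕ) : TsirelsonNorming (Finsupp.single i 1)
  | neg {f : ℕ →₀ ℝ} : TsirelsonNorming f → TsirelsonNorming (-f)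
  | op (d : ℕ) (g : Fin d → (ℕ →₀ ℝ)) :
      (∀ i, TsirelsonNorming (g i)) →
      (∀ i j : Fin d, i < j → ∀ a ∈ (g i).support, ∀ b ∈ (g j).support, a < b) →
      (∀ i : Fin d, ∀ a ∈ (g i).support, d ≤ a) →
      TsirelsonNorming ((2 : ℝ)⁻¹ • ∑ i, g i)

lemma sum_apply_cases {d : ℕ} (g : Fin d → (ℕ →₀ ℝ))
    (hsucc : ∀ i j : Fin d, i < j → ∀ a ∈ (g i).support, ∀ b ∈ (g j).support, a < b)
    (k : ℕ) : (∑ i, g i) k = 0 ∨ ∃ i, (∑ j, g j) k = g i k := by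
  by_cases h : ∀ i, g i k = 0
  · left
    rw [Finsupp.finset_sum_apply]
    exact Finset.sum_eq_zero fun i _ => h i
  · push_neg at h
    obtain ⟨i, hi⟩ := h
    right
    refine ⟨i, ?_⟩
    rw [Finsupp.finset_sum_apply]
    apply Finset.sum_eq_single
    · intro j _ hji
      by_contra hj
      rcases lt_or_gt_of_ne hji with h1 | h1
      · exact lt_irrefl k
          (hsucc j i h1 k (Finsupp.mem_support_iff.2 hj) k (Finsupp.mem_support_iff.2 hi))
      · exact lt_irrefl k
          (hsucc i j h1 k (Finsupp.mem_support_iff.2 hi) k (Finsupp.mem_support_iff.2 hj))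
    · simp

lemma norming_abs_le_one {f : ℕ →₀ ℝ} (hf : TsirelsonNorming f) : ∀ k, |f k| ≤ 1 := by
  induction hf with
  | basis i =>
    intro k
    rw [Finsupp.single_apply]
    split <;> simp
  | neg hf ih => intro k; simpa using ih k
  | op d g hg hsucc hmin ih =>
    intro k
    rw [Finsupp.smul_apply, smul_eq_mul, abs_mul]
    rcases sum_apply_cases g hsucc k with h | ⟨i, h⟩
    · rw [h]; simp
    · rw [h]
      calc |(2:ℝ)⁻¹| * |g i k| ≤ (2:ℝ)⁻¹ * 1 := by
            rw [abs_of_pos (by norm_num : (0:ℝ) < 2⁻¹)]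
            exact mul_le_mul_of_nonneg_left (ih i k) (by norm_num)
        _ ≤ 1 := by norm_num

lemma norming_decomp {f : ℕ →₀ ℝ} (hf : TsirelsonNorming f) :
    ∀ m : ℕ, ∃ E : Finset ℕ, E ∈ Schreier m ∧
      ∀ k, 1 ≤ k → k ∉ E → |f k| ≤ 1 / 2 ^ (m + 1) := by
  induction hf with
  | basis i =>
    intro m
    by_cases hi : 1 ≤ i
    · refine ⟨{i}, schreier_singleton m hi, fun k hk hkE => ?_⟩
      rw [Finsupp.single_apply, if_neg (by simp at hkE; omega), abs_zero]
      positivity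
    · refine ⟨∅, schreier_empty m, fun k hk _ => ?_⟩
      rw [Finsupp.single_apply, if_neg (by omega), abs_zero]
      positivity
  | neg hf ih =>
    intro m
    obtain ⟨E, hE, hEb⟩ := ih m
    exact ⟨E, hE, fun k hk hkE => by simpa using hEb k hk hkE⟩
  | op d g hg hsucc hmin ih =>
    intro m
    cases m with
    | zero =>
      refine ⟨∅, schreier_empty 0, fun k hk _ => ?_⟩
      rw [Finsupp.smul_apply, smul_eq_mul, abs_mul,
        abs_of_pos (by norm_num : (0:ℝ) < 2⁻¹)]
      rcases sum_apply_cases g hsucc k with h | ⟨i, h⟩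
      · rw [h]; norm_num
      · rw [h]
        have := norming_abs_le_one (hg i) k
        norm_num
        linarith
    | succ m =>
      classical
      choose E hE1 hE2 using fun i => ih i m
      refine ⟨Finset.univ.biUnion (fun i => E i ∩ (g i).support), ?_, ?_⟩
      · refine schreier_biUnion _
          (fun i => schreier_hereditary m _ _ (hE1 i) (Finset.inter_subset_left)) ?_ ?_
        · intro i j hij a ha b hb
          exact hsucc i j hij a (Finset.mem_inter.1 ha).2 b (Finset.mem_inter.1 hb).2
        · intro a ha
          simp only [Finset.mem_biUnion, Finset.mem_univ, true_and,
            Finset.mem_inter] at ha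
          obtain ⟨i, _, hi⟩ := ha
          exact hmin i a hi
      · intro k hk hkE
        rw [Finsupp.smul_apply, smul_eq_mul, abs_mul,
          abs_of_pos (by norm_num : (0:ℝ) < 2⁻¹)]
        rcases sum_apply_cases g hsucc k with h | ⟨i, h⟩
        · rw [h]; simp
        · rw [h]
          by_cases hgik : g i k = 0
          · rw [hgik]; simp
          · have hksupp : k ∈ (g i).support := Finsupp.mem_support_iff.2 hgik
            have hkEi : k ∉ E i := by
              intro hc
              exact hkE (Finset.mem_biUnion.2 ⟨i, Finset.mem_univ _,
                Finset.mem_inter.2 ⟨hc, hksupp⟩⟩)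
            have := hE2 i k hk hkEi
            calc (2:ℝ)⁻¹ * |g i k| ≤ (2:ℝ)⁻¹ * (1 / 2 ^ (m + 1)) :=
                  mul_le_mul_of_nonneg_left this (by norm_num)
              _ = 1 / 2 ^ (m + 1 + 1) := by ring

/-- The Tsirelson norm of a finitely supported vector. -/
noncomputable def tsirelsonNorm (x : ℕ →₀ ℝ) : ℝ :=
  sSup {r : ℝ | ∃ f : ℕ →₀ ℝ, TsirelsonNorming f ∧
    (x.sum fun i v => f i * v) = r}

lemma pairing_eq (G : Finset ℕ) (c : ℕ → ℝ) (f : ℕ →₀ ℝ) :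
    ((∑ k ∈ G, Finsupp.single k (c k)).sum fun i v => f i * v) =
      ∑ k ∈ G, f k * c k := by
  classical
  rw [← Finsupp.sum_finsetSum_index (fun i => by simp) (fun i b₁ b₂ => by ring)]
  exact Finset.sum_congr rfl fun k _ => Finsupp.sum_single_index (by simp)

/-- If `x = ∑_{k∈F} c_k e_k` is an `(n,ε)`-basic special convex combination,
then for every `G ⊆ F`,
`‖∑_{k∈G} c_k e_k‖_T ≤ (1/2ⁿ) ∑_{k∈G} c_k + ε`. -/
theorem tsirelson_norm_of_scc (n : ℕ) (ε : ℝ) (hε : 0 < ε)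
    (F : Finset ℕ) (c : ℕ → ℝ) (hscc : IsBasicSCC n ε F c) :
    ∀ G ⊆ F,
      tsirelsonNorm (∑ k ∈ G, Finsupp.single k (c k)) ≤
        (1 / 2 ^ n) * ∑ k ∈ G, c k + ε := by
  obtain ⟨hFS, hc0, hc1, hsmall⟩ := hscc
  intro G hG
  have hcG : 0 ≤ ∑ k ∈ G, c k := Finset.sum_nonneg fun k hk => hc0 k (hG hk)
  have hrhs : 0 ≤ (1 / 2 ^ n) * ∑ k ∈ G, c k + ε := by
    have : 0 ≤ (1 / 2 ^ n : ℝ) * ∑ k ∈ G, c k :=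
      mul_nonneg (by positivity) hcG
    linarith
  apply Real.sSup_le _ hrhs
  rintro r ⟨f, hf, rfl⟩
  rw [pairing_eq]
  cases n with
  | zero =>
    have hle : ∑ k ∈ G, f k * c k ≤ ∑ k ∈ G, c k := by
      apply Finset.sum_le_sum
      intro k hk
      have h1 := abs_le.1 (norming_abs_le_one hf k)
      have h2 := hc0 k (hG hk)
      nlinarith
    simp only [pow_zero]
    linarith
  | succ m =>
    obtain ⟨E, hE, hEb⟩ := norming_decomp hf m
    have hsplit : ∑ k ∈ G, f k * c k =
        ∑ k ∈ G ∩ E, f k * c k + ∑ k ∈ G \ E, f k * c k :=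
      (Finset.sum_inter_add_sum_sdiff G E _).symm
    have hA : ∑ k ∈ G ∩ E, f k * c k < ε := by
      have h1 : ∑ k ∈ G ∩ E, f k * c k ≤ ∑ k ∈ G ∩ E, c k := by
        apply Finset.sum_le_sum
        intro k hk
        have h1 := abs_le.1 (norming_abs_le_one hf k)
        have h2 := hc0 k (hG (Finset.mem_inter.1 hk).1)
        nlinarith
      have h2 : ∑ k ∈ G ∩ E, c k < ε := by
        apply hsmall (G ∩ E) (fun x hx => hG (Finset.mem_inter.1 hx).1)
        have : G ∩ E ∈ Schreier m :=
          schreier_hereditary m E (G ∩ E) hE (Finset.inter_subset_right)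
        simpa using this
      linarith
    have hB : ∑ k ∈ G \ E, f k * c k ≤ (1 / 2 ^ (m + 1)) * ∑ k ∈ G, c k := by
      have h1 : ∑ k ∈ G \ E, f k * c k ≤ ∑ k ∈ G \ E, (1 / 2 ^ (m + 1)) * c k := by
        apply Finset.sum_le_sum
        intro k hk
        obtain ⟨hkG, hkE⟩ := Finset.mem_sdiff.1 hk
        have hk1 : 1 ≤ k := schreier_succ_pos hFS k (hG hkG)
        have h1 := abs_le.1 (hEb k hk1 hkE)
        have h2 := hc0 k (hG hkG)
        nlinarith
      rw [← Finset.mul_sum] at h1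
      refine le_trans h1 (mul_le_mul_of_nonneg_left ?_ (by positivity))
      exact Finset.sum_le_sum_of_subset_of_nonneg (Finset.sdiff_subset)
        (fun k hk _ => hc0 k (hG hk))
    linarith
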